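/- Let k be an algebraically closed field of characteristic zero and let H be a k-linear subspace of k[X] of dimension r+1. For a ∈ k, let s_0^a < ⋯ < s_r^a be the elements of { ord_a(f) : f ∈ H, f ≠ 0 } and define the weight w(a) = s_0^a + ⋯ + s_r^a − r(r+1)/2. Let d_0 < d_1 < ⋯ < d_r be the elements of the set { deg(f) : f ∈ H, f ≠ 0 } (which has exactly r+1 elements). Then w(a) ≥ 0 for all a, w(a) = 0 for all but finitely many a ∈ k, and the total weight satisfies Σ_{a ∈ k} w(a) = d_0 + d_1 + ⋯ + d_r − r(r+1)/2. -/

import Mathlib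

set_option maxHeartbeats 1000000


/-- The set of vanishing orders at `a` of nonzero elements of a space `H` of
polynomials. -/
def ordersAt {k : Type*} [CommRing k] (H : Submodule k (Polynomial k))
    (a : k) : Set ℕ :=
  {n : ℕ | ∃ f ∈ H, f ≠ 0 ∧ Polynomial.rootMultiplicity a f = n}

/-- The Weierstrass weight of `a ∈ k` with respect to `H`: the sum
`s_0^a + ⋯ + s_r^a` of the vanishing orders at `a` of nonzero elements of `H`,
minus `r(r+1)/2`. -/
noncomputable def weight {k : Type*} [CommRing k] (r : ℕ)
    (H : Submodule k (Polynomial k)) (a : k) : ℤ :=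
  (∑ᶠ n ∈ ordersAt H a, (n : ℤ)) - r * (r + 1) / 2

/-- The set of degrees of nonzero elements of a space `H` of polynomials. -/
def degreesOf {k : Type*} [CommRing k] (H : Submodule k (Polynomial k)) : Set ℕ :=
  {n : ℕ | ∃ f ∈ H, f ≠ 0 ∧ f.natDegree = n}


open Polynomial Matrix

namespace St12




variable {k : Type*} [Field k]

lemma le_of_strictMono {m : ℕ} {f : Fin m → ℕ} (hf : StrictMono f) (i : Fin m) :
    (i : ℕ) ≤ f i := by
  have key : ∀ n : ℕ, ∀ i : Fin m, (i : ℕ) = n → n ≤ f i := by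
    intro n
    induction n with
    | zero => intro i _; exact Nat.zero_le _
    | succ p ih =>
      intro i hi
      have hp : p < m := by omega
      have h1 : (⟨p, hp⟩ : Fin m) < i := by simp [Fin.lt_def, hi]
      exact Nat.lt_of_le_of_lt (ih ⟨p, hp⟩ rfl) (hf h1)
  exact key _ i rfl

lemma coeff_prod_high {ι : Type*} (s : Finset ι) (f : ι → k[X]) (n : ι → ℕ)
    (h : ∀ i ∈ s, (f i).natDegree ≤ n i) :
    (∏ i ∈ s, f i).coeff (∑ i ∈ s, n i) = ∏ i ∈ s, (f i).coeff (n i) := by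
  induction s using Finset.cons_induction with
  | empty => simp
  | cons a s ha ih =>
    rw [Finset.prod_cons, Finset.sum_cons, Finset.prod_cons,
      ← ih (fun i hi => h i (Finset.mem_cons_of_mem hi))]
    exact coeff_mul_add_eq_of_natDegree_le (h a (Finset.mem_cons_self a s))
      ((natDegree_prod_le s f).trans (Finset.sum_le_sum fun i hi => h i (Finset.mem_cons_of_mem hi)))

lemma X_pow_sum_dvd {ι : Type*} (s : Finset ι) (f : ι → k[X]) (n : ι → ℕ)
    (h : ∀ i ∈ s, X ^ (n i) ∣ f i) : X ^ (∑ i ∈ s, n i) ∣ ∏ i ∈ s, f i := by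
  rw [← Finset.prod_pow_eq_pow_sum]
  exact Finset.prod_dvd_prod_of_dvd _ _ h

lemma coeff_mul_low (p q : k[X]) (a b : ℕ) (hp : ∀ l < a, p.coeff l = 0)
    (hq : ∀ l < b, q.coeff l = 0) : (p * q).coeff (a + b) = p.coeff a * q.coeff b := by
  rw [coeff_mul]
  apply Finset.sum_eq_single_of_mem (a, b) (Finset.HasAntidiagonal.mem_antidiagonal.2 rfl)
  rintro ⟨x, y⟩ hxy hne
  have hxy' : x + y = a + b := Finset.HasAntidiagonal.mem_antidiagonal.1 hxy
  rcases lt_trichotomy x a with h | h | h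
  · simp only [hp x h, zero_mul]
  · have hy : y = b := by omega
    exact absurd (by simp [h, hy]) hne
  · simp only [hq y (by omega), mul_zero]

lemma coeff_prod_low {ι : Type*} (s : Finset ι) (f : ι → k[X]) (n : ι → ℕ)
    (h : ∀ i ∈ s, ∀ l < n i, (f i).coeff l = 0) :
    (∏ i ∈ s, f i).coeff (∑ i ∈ s, n i) = ∏ i ∈ s, (f i).coeff (n i) := by
  induction s using Finset.cons_induction with
  | empty => simp
  | cons a s ha ih =>
    rw [Finset.prod_cons, Finset.sum_cons, Finset.prod_cons,
      ← ih (fun i hi => h i (Finset.mem_cons_of_mem hi))]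
    apply coeff_mul_low _ _ _ _ (h a (Finset.mem_cons_self a s))
    intro l hl
    have hdvd : X ^ (∑ i ∈ s, n i) ∣ ∏ i ∈ s, f i := by
      apply X_pow_sum_dvd
      intro i hi
      exact X_pow_dvd_iff.2 (h i (Finset.mem_cons_of_mem hi))
    exact X_pow_dvd_iff.1 hdvd l hl



variable {k : Type*} [Field k]

lemma det_descFactorial {m : ℕ} (s : Fin m → ℕ) :
    (Matrix.of fun i j : Fin m => ((s i).descFactorial (j : ℕ) : k)).det
      = ∏ i : Fin m, ∏ j ∈ Finset.Ioi i, ((s j : k) - (s i : k)) := by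
  have h := Matrix.det_eval_matrixOfPolynomials_eq_det_vandermonde
    (fun i : Fin m => (s i : k)) (fun j : Fin m => descPochhammer k (j : ℕ))
    (fun i => descPochhammer_natDegree k i) (fun i => monic_descPochhammer k i)
  have h2 : (Matrix.of fun i j : Fin m => ((s i).descFactorial (j : ℕ) : k))
      = (Matrix.of fun i j : Fin m => (descPochhammer k (j : ℕ)).eval ((s i : k))) := by
    ext i j
    simp [descPochhammer_eval_eq_descFactorial]
  rw [h2, ← h, Matrix.det_vandermonde]

lemma det_descFactorial_ne_zero {m : ℕ} [CharZero k] {s : Fin m → ℕ} (hs : StrictMono s) :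
    (Matrix.of fun i j : Fin m => ((s i).descFactorial (j : ℕ) : k)).det ≠ 0 := by
  rw [det_descFactorial]
  apply Finset.prod_ne_zero_iff.2
  intro i _
  apply Finset.prod_ne_zero_iff.2
  intro j hj
  have : s i < s j := hs (Finset.mem_Ioi.1 hj)
  have : (s i : k) ≠ (s j : k) := fun hc => this.ne (Nat.cast_injective hc)
  exact sub_ne_zero.2 (Ne.symm this)



noncomputable def wron {m : ℕ} (g : Fin m → k[X]) : k[X] :=
  (Matrix.of fun i j : Fin m => derivative^[(j : ℕ)] (g i)).det

lemma wron_deg {m : ℕ} [CharZero k] (g : Fin m → k[X]) (h0 : ∀ i, g i ≠ 0)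
    (hd : StrictMono fun i => (g i).natDegree) :
    wron g ≠ 0 ∧ (wron g).natDegree = ∑ i : Fin m, ((g i).natDegree - (i : ℕ)) := by
  set d : Fin m → ℕ := fun i => (g i).natDegree with hddef
  have hid : ∀ i : Fin m, (i : ℕ) ≤ d i := le_of_strictMono hd
  set D := ∑ i : Fin m, (d i - (i : ℕ)) with hDdef
  have hDsum : ∀ σ : Equiv.Perm (Fin m), (∀ i : Fin m, (i : ℕ) ≤ d (σ i)) →
      ∑ i : Fin m, (d (σ i) - (i : ℕ)) = D := by
    intro σ hσ
    have h1 : ∑ i : Fin m, (d (σ i) - (i : ℕ)) + ∑ i : Fin m, (i : ℕ)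
        = ∑ i : Fin m, d (σ i) := by
      rw [← Finset.sum_add_distrib]
      apply Finset.sum_congr rfl
      intro i _
      have := hσ i; omega
    have h2 : D + ∑ i : Fin m, (i : ℕ) = ∑ i : Fin m, d i := by
      rw [hDdef, ← Finset.sum_add_distrib]
      apply Finset.sum_congr rfl
      intro i _
      have := hid i; omega
    have h3 : ∑ i : Fin m, d (σ i) = ∑ i : Fin m, d i := Equiv.sum_comp σ d
    omega
  set M : Matrix (Fin m) (Fin m) k := Matrix.of fun i j : Fin m => ((d i).descFactorial (j : ℕ) : k) with hMdef
  set term : Equiv.Perm (Fin m) → k[X] :=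
    fun σ => ∏ i : Fin m, derivative^[(i : ℕ)] (g (σ i)) with htermdef
  have hterm_deg : ∀ σ, (term σ).natDegree ≤ D := by
    intro σ
    by_cases hgood : ∀ i : Fin m, (i : ℕ) ≤ d (σ i)
    · rw [← hDsum σ hgood, htermdef]
      exact (natDegree_prod_le _ _).trans
        (Finset.sum_le_sum fun i _ => natDegree_iterate_derivative _ _)
    · push_neg at hgood
      obtain ⟨i, hi⟩ := hgood
      have hzero : derivative^[(i : ℕ)] (g (σ i)) = 0 :=
        iterate_derivative_eq_zero hi
      have : term σ = 0 := Finset.prod_eq_zero (Finset.mem_univ i) hzero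
      simp [this]
  have hterm_coeff : ∀ σ : Equiv.Perm (Fin m), (term σ).coeff D
      = (∏ i : Fin m, (g i).leadingCoeff) * ∏ i : Fin m, M (σ i) i := by
    intro σ
    by_cases hgood : ∀ i : Fin m, (i : ℕ) ≤ d (σ i)
    · rw [← hDsum σ hgood, htermdef,
        coeff_prod_high Finset.univ _ (fun i => d (σ i) - (i : ℕ))
          (fun i _ => natDegree_iterate_derivative _ _)]
      have hcoeff : ∀ i : Fin m, (derivative^[(i : ℕ)] (g (σ i))).coeff (d (σ i) - (i : ℕ))
          = M (σ i) i * (g (σ i)).leadingCoeff := by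
        intro i
        rw [coeff_iterate_derivative, Nat.sub_add_cancel (hgood i), hMdef]
        simp only [Matrix.of_apply, nsmul_eq_mul]
        rfl
      rw [Finset.prod_congr rfl fun i _ => hcoeff i, Finset.prod_mul_distrib]
      rw [Equiv.prod_comp σ (fun i => (g i).leadingCoeff)]
      ring
    · push_neg at hgood
      obtain ⟨i, hi⟩ := hgood
      have hzero : derivative^[(i : ℕ)] (g (σ i)) = 0 := iterate_derivative_eq_zero hi
      have ht0 : term σ = 0 := Finset.prod_eq_zero (Finset.mem_univ i) hzero
      have hM0 : M (σ i) i = 0 := by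
        rw [hMdef]
        simp only [Matrix.of_apply]
        rw [Nat.descFactorial_eq_zero_iff_lt.2 hi]
        exact Nat.cast_zero
      rw [ht0, coeff_zero]
      exact (mul_eq_zero_of_right _ (Finset.prod_eq_zero (f := fun j => M (σ j) j) (Finset.mem_univ i) hM0)).symm
  have hw : wron g = ∑ σ : Equiv.Perm (Fin m), (Equiv.Perm.sign σ : ℤ) • term σ := by
    rw [wron, Matrix.det_apply]
    apply Finset.sum_congr rfl
    intro σ _
    rw [Units.smul_def]
    rfl
  have hcoeffD : (wron g).coeff D = (∏ i : Fin m, (g i).leadingCoeff) * M.det := by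
    rw [hw, finset_sum_coeff]
    simp_rw [coeff_smul, hterm_coeff]
    rw [Matrix.det_apply, Finset.mul_sum]
    apply Finset.sum_congr rfl
    intro σ _
    rw [Units.smul_def, zsmul_eq_mul, zsmul_eq_mul]
    push_cast
    ring
  have hMne : M.det ≠ 0 := det_descFactorial_ne_zero hd
  have hlead : (∏ i : Fin m, (g i).leadingCoeff) ≠ 0 :=
    Finset.prod_ne_zero_iff.2 fun i _ => leadingCoeff_ne_zero.2 (h0 i)
  have hcne : (wron g).coeff D ≠ 0 := by
    rw [hcoeffD]; exact mul_ne_zero hlead hMne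
  have hwne : wron g ≠ 0 := fun h => hcne (by simp [h])
  refine ⟨hwne, le_antisymm ?_ (le_natDegree_of_ne_zero hcne)⟩
  rw [hw]
  apply natDegree_sum_le_of_forall_le
  intro σ _
  have h1 : ((Equiv.Perm.sign σ : ℤ) • term σ).natDegree ≤ (term σ).natDegree := by
    rw [zsmul_eq_mul]
    exact (natDegree_mul_le).trans (by simp [natDegree_intCast])
  exact h1.trans (hterm_deg σ)


lemma wron_trail {m : ℕ} [CharZero k] (g : Fin m → k[X]) (h0 : ∀ i, g i ≠ 0)
    (hs : StrictMono fun i => (g i).natTrailingDegree) :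
    wron g ≠ 0 ∧ (wron g).natTrailingDegree
      = ∑ i : Fin m, ((g i).natTrailingDegree - (i : ℕ)) := by
  set s : Fin m → ℕ := fun i => (g i).natTrailingDegree with hsdef
  have hid : ∀ i : Fin m, (i : ℕ) ≤ s i := le_of_strictMono hs
  set t := ∑ i : Fin m, (s i - (i : ℕ)) with htdef
  have hcastt : (t : ℤ) = ∑ i : Fin m, ((s i : ℤ) - (i : ℕ)) := by
    rw [htdef, Nat.cast_sum]
    apply Finset.sum_congr rfl
    intro i _
    have := hid i
    omega
  set A : Equiv.Perm (Fin m) → ℕ := fun σ => ∑ i : Fin m, (s (σ i) - (i : ℕ)) with hAdef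
  have hcastA : ∀ σ : Equiv.Perm (Fin m), ∑ i : Fin m, ((s (σ i) : ℤ) - (i : ℕ)) = (t : ℤ) := by
    intro σ
    rw [Finset.sum_sub_distrib, Equiv.sum_comp σ (fun i => (s i : ℤ)), hcastt,
      Finset.sum_sub_distrib]
  have h_t_le : ∀ σ : Equiv.Perm (Fin m), t ≤ A σ := by
    intro σ
    have h1 : (t : ℤ) ≤ (A σ : ℤ) := by
      rw [← hcastA σ, hAdef, Nat.cast_sum]
      apply Finset.sum_le_sum
      intro i _
      omega
    exact_mod_cast h1
  set term : Equiv.Perm (Fin m) → k[X] :=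
    fun σ => ∏ i : Fin m, derivative^[(i : ℕ)] (g (σ i)) with htermdef
  have hvan_factor : ∀ (σ : Equiv.Perm (Fin m)) (i : Fin m), ∀ l < s (σ i) - (i : ℕ),
      (derivative^[(i : ℕ)] (g (σ i))).coeff l = 0 := by
    intro σ i l hl
    rw [coeff_iterate_derivative,
      coeff_eq_zero_of_lt_natTrailingDegree (show l + (i : ℕ) < s (σ i) by omega),
      smul_zero]
  have hdvd : ∀ σ : Equiv.Perm (Fin m), X ^ (A σ) ∣ term σ := by
    intro σ
    exact X_pow_sum_dvd Finset.univ _ (fun i => s (σ i) - (i : ℕ))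
      (fun i _ => X_pow_dvd_iff.2 (hvan_factor σ i))
  set M : Matrix (Fin m) (Fin m) k := Matrix.of fun i j : Fin m => ((s i).descFactorial (j : ℕ) : k) with hMdef
  have hterm_coeff : ∀ σ : Equiv.Perm (Fin m), (term σ).coeff t
      = (∏ i : Fin m, (g i).trailingCoeff) * ∏ i : Fin m, M (σ i) i := by
    intro σ
    by_cases hgood : ∀ i : Fin m, (i : ℕ) ≤ s (σ i)
    · have hAt : A σ = t := by
        have h1 : (A σ : ℤ) = (t : ℤ) := by
          rw [← hcastA σ, hAdef, Nat.cast_sum]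
          apply Finset.sum_congr rfl
          intro i _
          have := hgood i
          omega
        exact_mod_cast h1
      rw [← hAt, hAdef, htermdef,
        coeff_prod_low Finset.univ _ (fun i => s (σ i) - (i : ℕ)) (fun i _ => hvan_factor σ i)]
      have hcoeff : ∀ i : Fin m, (derivative^[(i : ℕ)] (g (σ i))).coeff (s (σ i) - (i : ℕ))
          = M (σ i) i * (g (σ i)).trailingCoeff := by
        intro i
        rw [coeff_iterate_derivative, Nat.sub_add_cancel (hgood i), hMdef]
        simp only [Matrix.of_apply, nsmul_eq_mul]
        rfl
      rw [Finset.prod_congr rfl fun i _ => hcoeff i, Finset.prod_mul_distrib,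
        Equiv.prod_comp σ (fun i => (g i).trailingCoeff)]
      ring
    · push_neg at hgood
      obtain ⟨i, hi⟩ := hgood
      have hlt : t < A σ := by
        have h1 : (t : ℤ) < (A σ : ℤ) := by
          rw [← hcastA σ, hAdef, Nat.cast_sum]
          apply Finset.sum_lt_sum (fun j _ => by omega) ⟨i, Finset.mem_univ i, by omega⟩
        exact_mod_cast h1
      have hM0 : M (σ i) i = 0 := by
        rw [hMdef]
        simp only [Matrix.of_apply]
        rw [Nat.descFactorial_eq_zero_iff_lt.2 hi]
        exact Nat.cast_zero
      rw [X_pow_dvd_iff.1 (hdvd σ) t hlt]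
      exact (mul_eq_zero_of_right _
        (Finset.prod_eq_zero (f := fun j => M (σ j) j) (Finset.mem_univ i) hM0)).symm
  have hw : wron g = ∑ σ : Equiv.Perm (Fin m), (Equiv.Perm.sign σ : ℤ) • term σ := by
    rw [wron, Matrix.det_apply]
    apply Finset.sum_congr rfl
    intro σ _
    rw [Units.smul_def]
    rfl
  have hvan : ∀ l < t, (wron g).coeff l = 0 := by
    intro l hl
    rw [hw, finset_sum_coeff]
    apply Finset.sum_eq_zero
    intro σ _
    rw [coeff_smul, X_pow_dvd_iff.1 ((pow_dvd_pow X (h_t_le σ)).trans (hdvd σ)) l hl, smul_zero]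
  have hcoefft : (wron g).coeff t = (∏ i : Fin m, (g i).trailingCoeff) * M.det := by
    rw [hw, finset_sum_coeff]
    simp_rw [coeff_smul, hterm_coeff]
    rw [Matrix.det_apply, Finset.mul_sum]
    apply Finset.sum_congr rfl
    intro σ _
    rw [Units.smul_def, zsmul_eq_mul, zsmul_eq_mul]
    ring
  have hMne : M.det ≠ 0 := det_descFactorial_ne_zero hs
  have htc : (∏ i : Fin m, (g i).trailingCoeff) ≠ 0 :=
    Finset.prod_ne_zero_iff.2 fun i _ => trailingCoeff_nonzero_iff_nonzero.2 (h0 i)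
  have hcne : (wron g).coeff t ≠ 0 := by
    rw [hcoefft]; exact mul_ne_zero htc hMne
  have hwne : wron g ≠ 0 := fun h => hcne (by simp [h])
  exact ⟨hwne, le_antisymm (natTrailingDegree_le_of_ne_zero hcne) (le_natTrailingDegree hwne hvan)⟩


lemma degree_bound (H : Submodule k k[X]) [FiniteDimensional k H] :
    ∃ N : ℕ, ∀ f ∈ H, f.natDegree ≤ N := by
  classical
  set b := Module.finBasis k H with hb
  refine ⟨Finset.univ.sup (fun i => ((b i : k[X])).natDegree), ?_⟩
  intro f hf
  have h1 : (⟨f, hf⟩ : H) = ∑ i, b.repr ⟨f, hf⟩ i • b i := (b.sum_repr ⟨f, hf⟩).symm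
  have hf2 : f = ∑ i, b.repr ⟨f, hf⟩ i • ((b i : H) : k[X]) := by
    have := congrArg (fun x : H => (x : k[X])) h1
    have h3 : ((∑ i, b.repr ⟨f, hf⟩ i • b i : H) : k[X]) = ∑ i, b.repr ⟨f, hf⟩ i • ((b i : H) : k[X]) := by
      rw [Submodule.coe_sum]; simp only [Submodule.coe_smul]
    exact this.trans h3
  rw [hf2]
  apply natDegree_sum_le_of_forall_le
  intro i _
  exact (natDegree_smul_le _ _).trans (Finset.le_sup (f := fun i => ((b i : k[X])).natDegree) (Finset.mem_univ i))

lemma indep_trailing {t : ℕ} (f : Fin t → k[X]) (h0 : ∀ i, f i ≠ 0)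
    (hmono : StrictMono fun i => (f i).natTrailingDegree) : LinearIndependent k f := by
  classical
  rw [linearIndependent_iff']
  intro s a hsum i hi
  by_contra hne
  set s' := s.filter (fun j => a j ≠ 0) with hs'def
  have hs' : s'.Nonempty := ⟨i, by simp [hs'def, hi, hne]⟩
  obtain ⟨i₀, hi₀, hmin⟩ := s'.exists_min_image (fun j => (f j).natTrailingDegree) hs'
  have hi₀s : i₀ ∈ s := (Finset.filter_subset _ _) hi₀
  have ha₀ : a i₀ ≠ 0 := (Finset.mem_filter.1 hi₀).2
  have hc := congrArg (fun q : k[X] => q.coeff ((f i₀).natTrailingDegree)) hsum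
  simp only [finset_sum_coeff, coeff_smul, coeff_zero] at hc
  rw [Finset.sum_eq_single i₀ ?_ (fun h => absurd hi₀s h)] at hc
  · exact ha₀ (by
      have := trailingCoeff_nonzero_iff_nonzero.2 (h0 i₀)
      rw [smul_eq_mul] at hc
      exact (mul_eq_zero.1 hc).resolve_right this)
  · intro j hj hji
    by_cases haj : a j = 0
    · rw [haj, zero_smul]
    · have hj' : j ∈ s' := Finset.mem_filter.2 ⟨hj, haj⟩
      have hle : (f i₀).natTrailingDegree ≤ (f j).natTrailingDegree := hmin j hj'
      have hlt : (f i₀).natTrailingDegree < (f j).natTrailingDegree := by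
        rcases hle.lt_or_eq with h | h
        · exact h
        · exact absurd (hmono.injective h.symm ▸ rfl : j = i₀) hji
      rw [coeff_eq_zero_of_lt_natTrailingDegree hlt, smul_zero]

lemma indep_degree {t : ℕ} (f : Fin t → k[X]) (h0 : ∀ i, f i ≠ 0)
    (hmono : StrictMono fun i => (f i).natDegree) : LinearIndependent k f := by
  classical
  rw [linearIndependent_iff']
  intro s a hsum i hi
  by_contra hne
  set s' := s.filter (fun j => a j ≠ 0) with hs'def
  have hs' : s'.Nonempty := ⟨i, by simp [hs'def, hi, hne]⟩
  obtain ⟨i₀, hi₀, hmax⟩ := s'.exists_max_image (fun j => (f j).natDegree) hs'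
  have hi₀s : i₀ ∈ s := (Finset.filter_subset _ _) hi₀
  have ha₀ : a i₀ ≠ 0 := (Finset.mem_filter.1 hi₀).2
  have hc := congrArg (fun q : k[X] => q.coeff ((f i₀).natDegree)) hsum
  simp only [finset_sum_coeff, coeff_smul, coeff_zero] at hc
  rw [Finset.sum_eq_single i₀ ?_ (fun h => absurd hi₀s h)] at hc
  · exact ha₀ (by
      have := leadingCoeff_ne_zero.2 (h0 i₀)
      rw [smul_eq_mul] at hc
      exact (mul_eq_zero.1 hc).resolve_right this)
  · intro j hj hji
    by_cases haj : a j = 0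
    · rw [haj, zero_smul]
    · have hj' : j ∈ s' := Finset.mem_filter.2 ⟨hj, haj⟩
      have hle : (f j).natDegree ≤ (f i₀).natDegree := hmax j hj'
      have hlt : (f j).natDegree < (f i₀).natDegree := by
        rcases hle.lt_or_eq with h | h
        · exact h
        · exact absurd (hmono.injective h ▸ rfl : j = i₀) hji
      rw [coeff_eq_zero_of_natDegree_lt hlt, smul_zero]



lemma echelon (H : Submodule k k[X]) [FiniteDimensional k H] {m : ℕ}
    (hm : Module.finrank k H = m) (ν μ : k[X] → ℕ) (N : ℕ)
    (hbnd : ∀ f ∈ H, f ≠ 0 → ν f ≤ N)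
    (hind : ∀ (t : ℕ) (f : Fin t → k[X]), (∀ i, f i ≠ 0) →
      StrictMono (fun i => ν (f i)) → LinearIndependent k f)
    (hred : ∀ f g : k[X], f ∈ H → g ∈ H → f ≠ 0 → g ≠ 0 → ν f = ν g →
      ∃ c : k, f - c • g = 0 ∨ (f - c • g ≠ 0 ∧ μ (f - c • g) < μ f)) :
    ∃ g : Fin m → k[X], (∀ i, g i ∈ H) ∧ (∀ i, g i ≠ 0) ∧
      StrictMono (fun i => ν (g i)) ∧ LinearIndependent k g ∧
      Submodule.span k (Set.range g) = H ∧
      {n | ∃ f ∈ H, f ≠ 0 ∧ ν f = n} = Set.range (fun i => ν (g i)) := by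
  classical
  set V := {n | ∃ f ∈ H, f ≠ 0 ∧ ν f = n} with hVdef
  have hVfin : V.Finite := Set.Finite.subset (Set.finite_Iic N)
    (by rintro n ⟨f, hf, h0, rfl⟩; exact hbnd f hf h0)
  have hrep : ∀ n : ℕ, ∃ f : k[X], n ∈ V → (f ∈ H ∧ f ≠ 0 ∧ ν f = n) := by
    intro n
    by_cases hn : n ∈ V
    · obtain ⟨f, hf, h0, hν⟩ := hn
      exact ⟨f, fun _ => ⟨hf, h0, hν⟩⟩
    · exact ⟨0, fun h => absurd h hn⟩
  choose p hp using hrep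
  -- every element of H lies in the span of the representatives
  have hkey : ∀ c : ℕ, ∀ f ∈ H, μ f ≤ c → f ∈ Submodule.span k (p '' V) := by
    intro c
    induction c with
    | zero =>
      intro f hf hμ
      by_cases h0 : f = 0
      · rw [h0]; exact Submodule.zero_mem _
      · have hfV : ν f ∈ V := ⟨f, hf, h0, rfl⟩
        obtain ⟨hqH, hq0, hqν⟩ := hp (ν f) hfV
        obtain ⟨c', hc'⟩ := hred f (p (ν f)) hf hqH h0 hq0 hqν.symm
        rcases hc' with h1 | ⟨_, h2⟩
        · have hfe : f = c' • p (ν f) := by rwa [sub_eq_zero] at h1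
          rw [hfe]
          exact Submodule.smul_mem _ _ (Submodule.subset_span ⟨ν f, hfV, rfl⟩)
        · omega
    | succ c ih =>
      intro f hf hμ
      by_cases h0 : f = 0
      · rw [h0]; exact Submodule.zero_mem _
      · have hfV : ν f ∈ V := ⟨f, hf, h0, rfl⟩
        obtain ⟨hqH, hq0, hqν⟩ := hp (ν f) hfV
        obtain ⟨c', hc'⟩ := hred f (p (ν f)) hf hqH h0 hq0 hqν.symm
        have hpmem : p (ν f) ∈ Submodule.span k (p '' V) :=
          Submodule.subset_span ⟨ν f, hfV, rfl⟩
        rcases hc' with h1 | ⟨_, h2⟩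
        · have hfe : f = c' • p (ν f) := by rwa [sub_eq_zero] at h1
          rw [hfe]
          exact Submodule.smul_mem _ _ hpmem
        · have hf' : f - c' • p (ν f) ∈ H :=
            Submodule.sub_mem _ hf (Submodule.smul_mem _ _ hqH)
          have hmem := ih _ hf' (by omega)
          have hfe : f = (f - c' • p (ν f)) + c' • p (ν f) := by ring
          rw [hfe]
          exact Submodule.add_mem _ hmem (Submodule.smul_mem _ _ hpmem)
  set T := hVfin.toFinset with hTdef
  set e := T.orderIsoOfFin rfl with hedef
  set g0 : Fin T.card → k[X] := fun i => p ((e i : ℕ)) with hg0def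
  have heV : ∀ i : Fin T.card, ((e i : ℕ) : ℕ) ∈ V := by
    intro i
    have := (e i).2
    rwa [Set.Finite.mem_toFinset] at this
  have hg0H : ∀ i, g0 i ∈ H := fun i => (hp _ (heV i)).1
  have hg0ne : ∀ i, g0 i ≠ 0 := fun i => (hp _ (heV i)).2.1
  have hg0ν : ∀ i, ν (g0 i) = (e i : ℕ) := fun i => (hp _ (heV i)).2.2
  have hg0mono : StrictMono (fun i => ν (g0 i)) := by
    intro i j hij
    show ν (g0 i) < ν (g0 j)
    rw [hg0ν, hg0ν]
    exact Subtype.coe_lt_coe.2 (e.strictMono hij)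
  have hg0ind : LinearIndependent k g0 := hind _ _ hg0ne hg0mono
  have hrange : Set.range g0 = p '' V := by
    ext x
    constructor
    · rintro ⟨i, rfl⟩
      exact ⟨(e i : ℕ), heV i, rfl⟩
    · rintro ⟨n, hn, rfl⟩
      obtain ⟨i, hi⟩ := e.surjective ⟨n, by rw [Set.Finite.mem_toFinset]; exact hn⟩
      exact ⟨i, by rw [hg0def]; simp [hi]⟩
  have hspan : Submodule.span k (Set.range g0) = H := by
    apply le_antisymm
    · rw [Submodule.span_le]
      rintro x ⟨i, rfl⟩
      exact hg0H i
    · intro f hf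
      rw [hrange]
      exact hkey (μ f) f hf le_rfl
  have hcard : T.card = m := by
    have h1 : Module.finrank k (Submodule.span k (Set.range g0)) = T.card := by
      rw [finrank_span_eq_card hg0ind, Fintype.card_fin]
    rw [hspan, hm] at h1
    exact h1.symm
  subst hcard
  refine ⟨g0, hg0H, hg0ne, hg0mono, hg0ind, hspan, ?_⟩
  ext n
  constructor
  · intro hn
    have hnT : n ∈ T := by rw [Set.Finite.mem_toFinset]; exact hn
    obtain ⟨i, hi⟩ := e.surjective ⟨n, hnT⟩
    refine ⟨i, ?_⟩
    show ν (g0 i) = n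
    rw [hg0ν i, hi]
  · rintro ⟨i, rfl⟩
    show ν (g0 i) ∈ V
    rw [hg0ν i]
    exact heV i



lemma red_trailing (f g : k[X]) (h0f : f ≠ 0) (h0g : g ≠ 0)
    (h : f.natTrailingDegree = g.natTrailingDegree) :
    ∃ c : k, f - c • g = 0 ∨ (f - c • g ≠ 0 ∧
      f.natTrailingDegree < (f - c • g).natTrailingDegree) := by
  set n := f.natTrailingDegree with hn
  refine ⟨f.trailingCoeff / g.trailingCoeff, ?_⟩
  by_cases h1 : f - (f.trailingCoeff / g.trailingCoeff) • g = 0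
  · exact Or.inl h1
  · refine Or.inr ⟨h1, ?_⟩
    have hvan : ∀ l < n + 1, (f - (f.trailingCoeff / g.trailingCoeff) • g).coeff l = 0 := by
      intro l hl
      rcases Nat.lt_or_ge l n with hln | hln
      · rw [coeff_sub, coeff_smul, coeff_eq_zero_of_lt_natTrailingDegree hln,
          coeff_eq_zero_of_lt_natTrailingDegree (by rw [← h]; exact hln), smul_zero, sub_zero]
      · have hleq : l = n := by omega
        have h' : n = g.natTrailingDegree := hn.symm.symm.trans h
        have hgc : g.coeff n = g.trailingCoeff := by rw [h']; rfl
        have hfc : f.coeff n = f.trailingCoeff := by rw [hn]; rfl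
        rw [hleq, coeff_sub, coeff_smul, smul_eq_mul, hgc, hfc,
          div_mul_cancel₀ _ (trailingCoeff_nonzero_iff_nonzero.2 h0g), sub_self]
    exact Nat.lt_of_succ_le (le_natTrailingDegree h1 hvan)

lemma red_degree (f g : k[X]) (h0f : f ≠ 0) (h0g : g ≠ 0)
    (h : f.natDegree = g.natDegree) :
    ∃ c : k, f - c • g = 0 ∨ (f - c • g ≠ 0 ∧
      (f - c • g).natDegree < f.natDegree) := by
  set n := f.natDegree with hn
  refine ⟨f.leadingCoeff / g.leadingCoeff, ?_⟩
  by_cases h1 : f - (f.leadingCoeff / g.leadingCoeff) • g = 0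
  · exact Or.inl h1
  · refine Or.inr ⟨h1, ?_⟩
    have hcn : (f - (f.leadingCoeff / g.leadingCoeff) • g).coeff n = 0 := by
      have h' : n = g.natDegree := hn.symm.symm.trans h
      have hgc : g.coeff n = g.leadingCoeff := by rw [h']; rfl
      have hfc : f.coeff n = f.leadingCoeff := by rw [hn]; rfl
      rw [coeff_sub, coeff_smul, smul_eq_mul, hgc, hfc,
        div_mul_cancel₀ _ (leadingCoeff_ne_zero.2 h0g), sub_self]
    have hle : (f - (f.leadingCoeff / g.leadingCoeff) • g).natDegree ≤ n := by
      apply natDegree_le_iff_coeff_eq_zero.2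
      intro l hl
      rw [coeff_sub, coeff_smul, coeff_eq_zero_of_natDegree_lt hl,
        coeff_eq_zero_of_natDegree_lt (by rw [← h]; exact hl), smul_zero, sub_zero]
    rcases hle.lt_or_eq with h2 | h2
    · exact h2
    · exfalso
      apply leadingCoeff_ne_zero.2 h1
      rw [leadingCoeff, h2]
      exact hcn

lemma iterate_derivative_taylor (a : k) (p : k[X]) (j : ℕ) :
    derivative^[j] ((taylor a) p) = (taylor a) (derivative^[j] p) := by
  induction j with
  | zero => rfl
  | succ j ih =>
    rw [Function.iterate_succ_apply', ih, Function.iterate_succ_apply']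
    show derivative ((taylor a) (derivative^[j] p)) = (taylor a) (derivative (derivative^[j] p))
    rw [taylor_apply, taylor_apply, derivative_comp]
    simp

lemma wron_taylor {m : ℕ} (a : k) (g : Fin m → k[X]) :
    wron (fun i => (taylor a) (g i)) = (taylor a) (wron g) := by
  have hmat : (Matrix.of fun i j : Fin m => derivative^[(j : ℕ)] ((taylor a) (g i)))
      = (Matrix.of fun i j : Fin m => derivative^[(j : ℕ)] (g i)).map
          ((taylorAlgHom a : k[X] →ₐ[k] k[X]) : k[X] →+* k[X]) := by
    ext i j
    simp only [Matrix.of_apply, Matrix.map_apply, iterate_derivative_taylor]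
    rfl
  rw [wron, hmat, ← RingHom.mapMatrix_apply, ← RingHom.map_det]
  rfl

lemma wron_smul {m : ℕ} (f h : Fin m → k[X]) (hf : LinearIndependent k f)
    (hsp : Submodule.span k (Set.range f) = Submodule.span k (Set.range h)) :
    ∃ c : k, c ≠ 0 ∧ wron h = C c * wron f := by
  classical
  have hMex : ∀ i, ∃ row : Fin m → k, ∑ j, row j • f j = h i := by
    intro i
    apply (Submodule.mem_span_range_iff_exists_fun k).1
    rw [hsp]
    exact Submodule.subset_span (Set.mem_range_self i)
  have hNex : ∀ i, ∃ row : Fin m → k, ∑ j, row j • h j = f i := by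
    intro i
    apply (Submodule.mem_span_range_iff_exists_fun k).1
    rw [← hsp]
    exact Submodule.subset_span (Set.mem_range_self i)
  choose M hM using hMex
  choose N hN using hNex
  have hkey : ∀ i, ∑ l, ((Matrix.of N * Matrix.of M) i l) • f l = f i := by
    intro i
    calc ∑ l, ((Matrix.of N * Matrix.of M) i l) • f l
        = ∑ l, (∑ j, N i j * M j l) • f l := by
          apply Finset.sum_congr rfl
          intro l _
          rw [Matrix.mul_apply]
          rfl
      _ = ∑ l, ∑ j, (N i j * M j l) • f l := by
          apply Finset.sum_congr rfl
          intro l _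
          rw [Finset.sum_smul]
      _ = ∑ j, ∑ l, (N i j * M j l) • f l := Finset.sum_comm
      _ = ∑ j, N i j • (∑ l, M j l • f l) := by
          apply Finset.sum_congr rfl
          intro j _
          rw [Finset.smul_sum]
          apply Finset.sum_congr rfl
          intro l _
          rw [← smul_smul]
      _ = ∑ j, N i j • h j := by
          apply Finset.sum_congr rfl
          intro j _
          rw [hM j]
      _ = f i := hN i
  have hone : Matrix.of N * Matrix.of M = 1 := by
    ext i l
    have h0 : ∑ l, ((Matrix.of N * Matrix.of M) i l - (1 : Matrix (Fin m) (Fin m) k) i l) • f l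
        = 0 := by
      simp only [sub_smul, Finset.sum_sub_distrib, hkey]
      have : ∑ l, (1 : Matrix (Fin m) (Fin m) k) i l • f l = f i := by
        rw [Finset.sum_eq_single i]
        · rw [Matrix.one_apply_eq, one_smul]
        · intro j _ hj
          rw [Matrix.one_apply_ne' hj, zero_smul]
        · intro habs
          exact absurd (Finset.mem_univ i) habs
      rw [this, sub_self]
    have := Fintype.linearIndependent_iff.1 hf _ h0 l
    exact sub_eq_zero.1 this
  have hdet : (Matrix.of M).det ≠ 0 := by
    intro hd
    have h1 : (Matrix.of N).det * (Matrix.of M).det = 1 := by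
      rw [← Matrix.det_mul, hone, Matrix.det_one]
    rw [hd, mul_zero] at h1
    exact zero_ne_one h1
  refine ⟨(Matrix.of M).det, hdet, ?_⟩
  have hmat : (Matrix.of fun i j : Fin m => derivative^[(j : ℕ)] (h i))
      = (Matrix.of M).map C * (Matrix.of fun i j : Fin m => derivative^[(j : ℕ)] (f i)) := by
    refine Matrix.ext fun i j => ?_
    have hlin : ∀ (jj : ℕ) (c : Fin m → k) (q : Fin m → k[X]),
        derivative^[jj] (∑ l, c l • q l) = ∑ l, c l • derivative^[jj] (q l) := by
      intro jj
      induction jj with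
      | zero => intro c q; rfl
      | succ jj ih =>
        intro c q
        rw [Function.iterate_succ_apply', ih, derivative_sum]
        apply Finset.sum_congr rfl
        intro l _
        rw [derivative_smul, Function.iterate_succ_apply']
    calc (Matrix.of fun i j : Fin m => derivative^[(j : ℕ)] (h i)) i j
        = derivative^[(j : ℕ)] (∑ l, M i l • f l) := by rw [Matrix.of_apply, hM i]
      _ = ∑ l, M i l • derivative^[(j : ℕ)] (f l) := hlin _ _ _
      _ = ∑ l, C (M i l) * derivative^[(j : ℕ)] (f l) := by
          apply Finset.sum_congr rfl
          intro l _
          rw [smul_eq_C_mul]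
      _ = ((Matrix.of M).map C * (Matrix.of fun i j : Fin m => derivative^[(j : ℕ)] (f i))) i j := by
          rw [Matrix.mul_apply]
          rfl
  rw [wron, wron, hmat, Matrix.det_mul, ← RingHom.mapMatrix_apply, ← RingHom.map_det]




end St12

/-- Over an algebraically closed field of characteristic zero, for
an `(r+1)`-dimensional subspace `H ⊆ k[X]`, the weight `w(a)` is nonnegative for
every `a`, vanishes for all but finitely many `a ∈ k`, the set of degrees
`d_0 < ⋯ < d_r` of nonzero elements of `H` has exactly `r + 1` elements, and the
total weight is `Σ_a w(a) = d_0 + d_1 + ⋯ + d_r - r(r+1)/2`. -/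
theorem statement_12 {k : Type*} [Field k] [IsAlgClosed k] [CharZero k] (r : ℕ)
    (H : Submodule k (Polynomial k)) [FiniteDimensional k H]
    (hdim : Module.finrank k H = r + 1) :
    (∀ a : k, 0 ≤ weight r H a) ∧
    {a : k | weight r H a ≠ 0}.Finite ∧
    (degreesOf H).ncard = r + 1 ∧
    ∑ᶠ a : k, weight r H a = (∑ᶠ n ∈ degreesOf H, (n : ℤ)) - r * (r + 1) / 2 := by
  classical
  obtain ⟨N, hN⟩ := St12.degree_bound H
  obtain ⟨h, hhH, hhne, hhmono, hhind, hhspan, hhrange⟩ :=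
    St12.echelon H hdim natDegree natDegree N (fun f hf _ => hN f hf)
      (fun t f h0 hm => St12.indep_degree f h0 hm)
      (fun f g _ _ h0f h0g hν => St12.red_degree f g h0f h0g hν)
  set P := St12.wron h with hP
  obtain ⟨hPne, hPdeg⟩ := St12.wron_deg h hhne hhmono
  have hdeg_set : degreesOf H = Set.range (fun i => (h i).natDegree) := hhrange
  have hinj : Function.Injective (fun i : Fin (r+1) => (h i).natDegree) := hhmono.injective
  have hncard : (degreesOf H).ncard = r + 1 := by
    rw [hdeg_set, ← Set.image_univ, Set.ncard_image_of_injective _ hinj]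
    simp [Set.ncard_univ]
  have hdeg_sum : (∑ᶠ n ∈ degreesOf H, (n : ℤ)) = ∑ i : Fin (r+1), ((h i).natDegree : ℤ) := by
    rw [hdeg_set, ← Set.image_univ, ← Finset.coe_univ, ← Finset.coe_image,
      finsum_mem_coe_finset, Finset.sum_image (fun x _ y _ hxy => hinj hxy)]
  have hGauss : ((r : ℤ) * ((r : ℤ) + 1)) / 2 = ∑ i : Fin (r+1), ((i : ℕ) : ℤ) := by
    have hnat2 : (∑ i ∈ Finset.range (r+1), i) * 2 = r * (r+1) := by
      rw [Finset.sum_range_id_mul_two]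
      simp [Nat.mul_comm]
    have hfin : (∑ i : Fin (r+1), ((i : ℕ) : ℤ)) = ((∑ i ∈ Finset.range (r+1), i : ℕ) : ℤ) := by
      rw [Nat.cast_sum]
      exact Fin.sum_univ_eq_sum_range (fun i => (i : ℤ)) (r+1)
    have h2 : (∑ i : Fin (r+1), ((i : ℕ) : ℤ)) * 2 = (r : ℤ) * ((r : ℤ) + 1) := by
      rw [hfin]
      exact_mod_cast hnat2
    rw [← h2, Int.mul_ediv_cancel _ two_ne_zero]
  -- the key pointwise identity
  have hroot : ∀ a : k, weight r H a = (rootMultiplicity a P : ℤ) := by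
    intro a
    have hdim' : Module.finrank k (H.map (taylor a)) = r + 1 := by
      rw [← (Submodule.equivMapOfInjective (taylor a) (taylor_injective a) H).finrank_eq]
      exact hdim
    obtain ⟨N', hN'⟩ := St12.degree_bound (H.map (taylor a))
    obtain ⟨g', hg'H, hg'ne, hg'mono, hg'ind, hg'span, hg'range⟩ :=
      St12.echelon (H.map (taylor a)) hdim' natTrailingDegree
        (fun q => N' + 1 - q.natTrailingDegree) N'
        (fun f hf _ => (natTrailingDegree_le_natDegree f).trans (hN' f hf))
        (fun t f h0 hm => St12.indep_trailing f h0 hm)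
        (fun f g hf _ h0f h0g hν => by
          obtain ⟨c, hc⟩ := St12.red_trailing f g h0f h0g hν
          refine ⟨c, ?_⟩
          rcases hc with h1 | ⟨h1, h2⟩
          · exact Or.inl h1
          · refine Or.inr ⟨h1, ?_⟩
            have hb1 : f.natTrailingDegree ≤ N' :=
              (natTrailingDegree_le_natDegree f).trans (hN' f hf)
            show N' + 1 - (f - c • g).natTrailingDegree < N' + 1 - f.natTrailingDegree
            omega)
    set g : Fin (r+1) → k[X] := fun i => taylor (-a) (g' i) with hg
    have htg : ∀ i, taylor a (g i) = g' i := by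
      intro i
      show taylor a (taylor (-a) (g' i)) = g' i
      rw [taylor_taylor, add_neg_cancel, taylor_zero]
    have hgH : ∀ i, g i ∈ H := by
      intro i
      obtain ⟨u, hu, hequ⟩ := Submodule.mem_map.1 (hg'H i)
      have heq : u = g i := taylor_injective a (by rw [htg i, hequ])
      rwa [← heq]
    have hgne : ∀ i, g i ≠ 0 := fun i h0 => hg'ne i (by rw [← htg i, h0, map_zero])
    have hord : ∀ q : k[X], rootMultiplicity a q = (taylor a q).natTrailingDegree := by
      intro q
      rw [rootMultiplicity_eq_natTrailingDegree, taylor_apply]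
    have hgord : ∀ i, rootMultiplicity a (g i) = (g' i).natTrailingDegree := by
      intro i
      rw [hord, htg i]
    have hgmono : StrictMono fun i => rootMultiplicity a (g i) := by
      intro i j hij
      show rootMultiplicity a (g i) < rootMultiplicity a (g j)
      rw [hgord, hgord]
      exact hg'mono hij
    have hgind : LinearIndependent k g := by
      apply LinearIndependent.of_comp (taylor a)
      have hcomp : (⇑(taylor a) ∘ g) = g' := funext htg
      rw [hcomp]
      exact hg'ind
    have hgspan : Submodule.span k (Set.range g) = H := by
      apply Submodule.map_injective_of_injective (taylor_injective a)
      rw [Submodule.map_span, ← Set.range_comp]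
      have hcomp : (⇑(taylor a) ∘ g) = g' := funext htg
      rw [hcomp, hg'span]
    obtain ⟨c, hcne, hPc⟩ := St12.wron_smul g h hgind (by rw [hgspan, hhspan])
    have hwg' : St12.wron g' = taylor a (St12.wron g) := by
      rw [← St12.wron_taylor a g]
      exact congrArg St12.wron (funext fun i => (htg i).symm)
    obtain ⟨hg'wne, hg'wtrail⟩ := St12.wron_trail g' hg'ne hg'mono
    have hwgne : St12.wron g ≠ 0 := fun h0 => hg'wne (by rw [hwg', h0, map_zero])
    have hwgord : rootMultiplicity a (St12.wron g)
        = ∑ i : Fin (r+1), ((g' i).natTrailingDegree - (i : ℕ)) := by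
      rw [hord, ← hwg', hg'wtrail]
    have hPord : rootMultiplicity a P = rootMultiplicity a (St12.wron g) := by
      rw [hP, hPc, rootMultiplicity_mul (by
        rw [← hPc, ← hP]; exact hPne), rootMultiplicity_C, zero_add]
    have horders : ordersAt H a = Set.range (fun i => rootMultiplicity a (g i)) := by
      have h1 : ordersAt H a
          = {n | ∃ f ∈ H.map (taylor a), f ≠ 0 ∧ f.natTrailingDegree = n} := by
        ext n
        constructor
        · rintro ⟨f, hf, h0, rfl⟩
          exact ⟨taylor a f, Submodule.mem_map_of_mem hf,
            fun hc => h0 (taylor_injective a (by rw [hc, map_zero])), (hord f).symm⟩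
        · rintro ⟨f', hf', h0, rfl⟩
          obtain ⟨u, hu, rfl⟩ := Submodule.mem_map.1 hf'
          exact ⟨u, hu, fun hc => h0 (by rw [hc, map_zero]), hord u⟩
      rw [h1, hg'range]
      exact congrArg Set.range (funext fun i => (hgord i).symm)
    have hinj' : Function.Injective fun i : Fin (r+1) => rootMultiplicity a (g i) :=
      hgmono.injective
    have hsum : (∑ᶠ n ∈ ordersAt H a, (n : ℤ))
        = ∑ i : Fin (r+1), ((rootMultiplicity a (g i) : ℕ) : ℤ) := by
      rw [horders, ← Set.image_univ, ← Finset.coe_univ, ← Finset.coe_image,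
        finsum_mem_coe_finset, Finset.sum_image (fun x _ y _ hxy => hinj' hxy)]
    have hile : ∀ i : Fin (r+1), (i : ℕ) ≤ rootMultiplicity a (g i) :=
      St12.le_of_strictMono hgmono
    have hcast : ((rootMultiplicity a P : ℕ) : ℤ)
        = (∑ i : Fin (r+1), ((rootMultiplicity a (g i) : ℕ) : ℤ))
          - ∑ i : Fin (r+1), ((i : ℕ) : ℤ) := by
      rw [hPord, hwgord, Nat.cast_sum, ← Finset.sum_sub_distrib]
      apply Finset.sum_congr rfl
      intro i _
      have h1 := hile i
      rw [hgord] at h1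
      rw [← hgord i]
      have h2 := hgord i
      omega
    have hwdef : weight r H a
        = (∑ᶠ n ∈ ordersAt H a, (n : ℤ)) - ((r : ℤ) * ((r : ℤ) + 1)) / 2 := rfl
    rw [hwdef, hsum, hGauss]
    omega
  refine ⟨?_, ?_, hncard, ?_⟩
  · intro a
    rw [hroot a]
    exact Int.natCast_nonneg _
  · apply Set.Finite.subset (finite_setOf_isRoot hPne)
    intro a ha
    simp only [Set.mem_setOf_eq] at ha ⊢
    rw [hroot a] at ha
    have hne : rootMultiplicity a P ≠ 0 := fun h0 => ha (by rw [h0]; rfl)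
    exact (rootMultiplicity_pos hPne).1 (Nat.pos_of_ne_zero hne)
  · have hsupp : (Function.support fun a : k => ((rootMultiplicity a P : ℕ) : ℤ))
        ⊆ ↑P.roots.toFinset := by
      intro a ha
      simp only [Function.mem_support] at ha
      have hne : rootMultiplicity a P ≠ 0 := fun h0 => ha (by rw [h0]; rfl)
      rw [Finset.mem_coe, Multiset.mem_toFinset, mem_roots']
      exact ⟨hPne, (rootMultiplicity_pos hPne).1 (Nat.pos_of_ne_zero hne)⟩
    have hile2 : ∀ i : Fin (r+1), (i : ℕ) ≤ (h i).natDegree := St12.le_of_strictMono hhmono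
    have hfinal : ((P.natDegree : ℕ) : ℤ)
        = (∑ i : Fin (r+1), ((h i).natDegree : ℤ)) - ∑ i : Fin (r+1), ((i : ℕ) : ℤ) := by
      rw [hPdeg, Nat.cast_sum, ← Finset.sum_sub_distrib]
      apply Finset.sum_congr rfl
      intro i _
      have h1 := hile2 i
      omega
    calc ∑ᶠ a : k, weight r H a
        = ∑ᶠ a : k, ((rootMultiplicity a P : ℕ) : ℤ) := finsum_congr hroot
      _ = ∑ a ∈ P.roots.toFinset, ((rootMultiplicity a P : ℕ) : ℤ) :=
          finsum_eq_sum_of_support_subset _ hsupp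
      _ = ((∑ a ∈ P.roots.toFinset, rootMultiplicity a P : ℕ) : ℤ) := by
          rw [Nat.cast_sum]
      _ = ((Multiset.card P.roots : ℕ) : ℤ) := by
          congr 1
          simp_rw [← count_roots]
          exact Multiset.toFinset_sum_count_eq _
      _ = ((P.natDegree : ℕ) : ℤ) := by
          congr 1
          exact IsAlgClosed.card_roots_eq_natDegree
      _ = (∑ᶠ n ∈ degreesOf H, (n : ℤ)) - (r : ℤ) * ((r : ℤ) + 1) / 2 := by
          rw [hfinal, hdeg_sum, hGauss]
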